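/- Let S be a finite semigroup that is a left regular band of groups, with idempotent-power map ω. For every s ∈ S and every idempotent x ∈ S, one has s·x ∼ x·s. (Equivalently, the quotient semigroup T = S/∼ has central idempotents, hence is a semilattice of groups.) -/
import Mathlib


/-- The support relation `s ∼ t` on a left regular band of groups:
`(ω s)·t = s` and `(ω t)·s = t`. -/
def LRBGsim {S : Type*} [Mul S] (ω : S → S) (s t : S) : Prop :=
  ω s * t = s ∧ ω t * s = t

private lemma lrbg_aux_fix {S : Type*} [Semigroup S] (a x : S) (hax : a * x = a) :
    ∀ n : ℕ, ((fun t => t * a)^[n] a) * x = (fun t => t * a)^[n] a := by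
  intro n
  induction n with
  | zero => simpa using hax
  | succ n ih =>
      rw [Function.iterate_succ_apply']
      simp only [mul_assoc, hax]

/-- In a finite LRBG, `s·x ∼ x·s` for every element `s` and every
idempotent `x`; hence the quotient `S/∼` has central idempotents. -/
theorem lrbg_quotient_central_idempotents {S : Type*} [Semigroup S] [Fintype S] (ω : S → S)
    (hidem : ∀ s : S, ω s * ω s = ω s)
    (hpow : ∀ s : S, ∃ n : ℕ, ω s = (fun t => t * s)^[n] s)
    (lrbg1 : ∀ s : S, ω s * s = s)
    (lrbg2 : ∀ s t : S, s * t * ω s = s * t) :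
    ∀ s x : S, x * x = x → LRBGsim ω (s * x) (x * s) := by
  intro s x hx
  -- ω of any idempotent is itself
  have homega_idem : ∀ y : S, y * y = y → ω y = y := by
    intro y hy
    obtain ⟨n, hn⟩ := hpow y
    rw [hn]
    clear hn
    induction n with
    | zero => simp
    | succ n ih => rw [Function.iterate_succ_apply', ih, hy]
  set e := ω (s * x) with he
  set f := ω (x * s) with hf
  -- e * x = e
  have hex : e * x = e := by
    obtain ⟨n, hn⟩ := hpow (s * x)
    rw [he, hn]
    exact lrbg_aux_fix (s * x) x (by rw [mul_assoc, hx]) n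
  -- x * s * x = x * s
  have hxsx : x * s * x = x * s := by
    have := lrbg2 x s
    rwa [homega_idem x hx] at this
  -- f * x = f
  have hfx : f * x = f := by
    obtain ⟨n, hn⟩ := hpow (x * s)
    rw [hf, hn]
    exact lrbg_aux_fix (x * s) x hxsx n
  -- ω e = e
  have hee : ω e = e := homega_idem e (hidem (s * x))
  constructor
  · -- e * (x * s) = s * x
    have h1 : e * (x * s) = e * s := by rw [← mul_assoc, hex]
    -- e * s * e = e * s
    have h2 : e * s * e = e * s := by
      have := lrbg2 e s
      rwa [hee] at this
    -- e * s * x = e * s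
    have h3 : e * s * x = e * s := by
      conv_lhs => rw [← h2]
      rw [mul_assoc, hex, h2]
    -- e * s * x = s * x
    have h4 : e * s * x = s * x := by
      rw [mul_assoc]
      exact lrbg1 (s * x)
    rw [h1, ← h3, h4]
  · -- f * (s * x) = x * s
    have h1 : f * (s * x) = f * (x * s) := by
      calc f * (s * x) = f * x * (s * x) := by rw [hfx]
        _ = f * (x * s * x) := by simp only [mul_assoc]
        _ = f * (x * s) := by rw [hxsx]
    rw [h1]
    exact lrbg1 (x * s)
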